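/- arXiv:2201.02308 — 2 statements merged into one kernel-verified Lean document; each statement's English description precedes it below -/
import Mathlib

section
/- The map x_0 ↦ x_0 x_2^{-1}, x_1 ↦ x_1 x_2^{-1} extends to an injective group endomorphism of Thompson's group F. -/
/-- The defining relation of Thompson's monoid: `x_j x_i = x_i x_{j+1}` for `i < j`. -/
def thompsonRel : FreeMonoid ℕ → FreeMonoid ℕ → Prop := fun a b =>
  ∃ i j : ℕ, i < j ∧ a = FreeMonoid.of j * FreeMonoid.of i ∧
    b = FreeMonoid.of i * FreeMonoid.of (j + 1)

/-- The congruence on the free monoid generated by the Thompson relations. -/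
def thompsonCon : Con (FreeMonoid ℕ) := conGen thompsonRel

/-- Thompson's monoid `M`. -/
abbrev ThompsonM := thompsonCon.Quotient

/-- The generators `x_n` of Thompson's monoid. -/
def xM (n : ℕ) : ThompsonM := thompsonCon.mk' (FreeMonoid.of n)

/-- The shift endomorphism `φ : M → M`, `x_i ↦ x_{i+1}`. -/
def shiftM : ThompsonM →* ThompsonM :=
  Con.lift _ ((Con.mk' thompsonCon).comp (FreeMonoid.map Nat.succ)) (by
    apply Con.conGen_le.2
    rintro a b ⟨i, j, hij, rfl, rfl⟩
    simp only [Con.ker_rel, MonoidHom.comp_apply, map_mul, FreeMonoid.map_of]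
    exact Con.eq _ |>.2 (ConGen.Rel.of _ _ ⟨i + 1, j + 1, by omega, rfl, rfl⟩))

/-- The relators of Thompson's group `F` (infinite presentation). -/
def thompsonRels : Set (FreeGroup ℕ) :=
  {w | ∃ i j : ℕ, i < j ∧
    w = FreeGroup.of j * FreeGroup.of i * (FreeGroup.of i * FreeGroup.of (j + 1))⁻¹}

/-- Thompson's group `F`. -/
abbrev ThompsonF := PresentedGroup thompsonRels

/-- The generators `x_n` of Thompson's group. -/
def xF (n : ℕ) : ThompsonF := PresentedGroup.of n

/-- Word length, as a monoid homomorphism on the free monoid. -/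
def lenHom : FreeMonoid ℕ →* Multiplicative ℕ where
  toFun w := Multiplicative.ofAdd w.length
  map_one' := by simp
  map_mul' a b := by
    simp [FreeMonoid.length_mul, ofAdd_add]

/-- Length is well defined on Thompson's monoid. -/
def lenM : ThompsonM →* Multiplicative ℕ :=
  Con.lift _ lenHom (by
    apply Con.conGen_le.2
    rintro a b ⟨i, j, hij, rfl, rfl⟩
    show Multiplicative.ofAdd _ = Multiplicative.ofAdd _
    simp [FreeMonoid.length_mul])

/-- The length of an element of Thompson's monoid. -/
def mlen (g : ThompsonM) : ℕ := Multiplicative.toAdd (lenM g)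

/-- The degree of an element of the monoid ring `K[M]`. -/
noncomputable def mdeg {K : Type*} [Field K] (a : MonoidAlgebra K ThompsonM) : ℕ :=
  a.coeff.support.sup mlen

/-- The submonoid `M_i` of `M` generated by `x_i, x_{i+1}, …`. -/
def Msub (i : ℕ) : Submonoid ThompsonM :=
  Submonoid.closure {g | ∃ n : ℕ, i ≤ n ∧ g = xM n}

/-- The shift endomorphism of the monoid ring `K[M]` induced by `φ`. -/
noncomputable def shiftA (K : Type*) [Field K] :
    MonoidAlgebra K ThompsonM →+* MonoidAlgebra K ThompsonM :=
  MonoidAlgebra.mapDomainRingHom K shiftM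

/-- The natural homomorphism of Thompson's monoid into Thompson's group. -/
def iotaMF : ThompsonM →* ThompsonF :=
  Con.lift _ (FreeMonoid.lift xF) (by
    apply Con.conGen_le.2
    rintro a b ⟨i, j, hij, rfl, rfl⟩
    simp only [Con.ker_rel, map_mul, FreeMonoid.lift_eval_of]
    have h : (FreeGroup.of j * FreeGroup.of i *
        (FreeGroup.of i * FreeGroup.of (j + 1))⁻¹ : FreeGroup ℕ) ∈ thompsonRels :=
      ⟨i, j, hij, rfl⟩
    have h1 : PresentedGroup.mk thompsonRels
        (FreeGroup.of j * FreeGroup.of i * (FreeGroup.of i * FreeGroup.of (j + 1))⁻¹) = 1 := by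
      exact (QuotientGroup.eq_one_iff _).2 (Subgroup.subset_normalClosure h)
    have := h1
    rw [map_mul, map_mul, map_inv, map_mul, mul_inv_eq_one] at this
    simpa [xF, PresentedGroup.of] using this)

/-- The generator `x_n` as an element of the group ring `K[F]`. -/
noncomputable def XF (K : Type*) [Field K] (n : ℕ) : MonoidAlgebra K ThompsonF :=
  MonoidAlgebra.of K ThompsonF (xF n)

/-- The generator `x_n` as an element of the monoid ring `K[M]`. -/
noncomputable def XMa (K : Type*) [Field K] (n : ℕ) : MonoidAlgebra K ThompsonM :=
  MonoidAlgebra.of K ThompsonM (xM n)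

namespace Stmt4Aux

open Equiv List

local infixr:67 " ::: " => Stream'.cons

abbrev XX : Type := Stream' Bool

/-! ### Relations in the group and in the monoid -/

theorem xF_rel {i j : ℕ} (h : i < j) : xF j * xF i = xF i * xF (j + 1) := by
  have hmem : (FreeGroup.of j * FreeGroup.of i *
      (FreeGroup.of i * FreeGroup.of (j + 1))⁻¹ : FreeGroup ℕ) ∈ thompsonRels :=
    ⟨i, j, h, rfl⟩
  have h1 : PresentedGroup.mk thompsonRels
      (FreeGroup.of j * FreeGroup.of i * (FreeGroup.of i * FreeGroup.of (j + 1))⁻¹) = 1 :=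
    (QuotientGroup.eq_one_iff _).2 (Subgroup.subset_normalClosure hmem)
  rw [map_mul, map_mul, map_inv, map_mul, mul_inv_eq_one] at h1
  simpa [xF, PresentedGroup.of] using h1

theorem xM_rel {i j : ℕ} (h : i < j) : xM j * xM i = xM i * xM (j + 1) := by
  have hcon : thompsonCon (FreeMonoid.of j * FreeMonoid.of i)
      (FreeMonoid.of i * FreeMonoid.of (j + 1)) :=
    ConGen.Rel.of _ _ ⟨i, j, h, rfl, rfl⟩
  have : thompsonCon.mk' (FreeMonoid.of j * FreeMonoid.of i) =
      thompsonCon.mk' (FreeMonoid.of i * FreeMonoid.of (j + 1)) := by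
    exact (Con.eq _).2 hcon
  simpa [xM, map_mul] using this



/-! ### The permutation model on the Cantor space -/

def f0fun : XX → XX := fun s =>
  cond s.head (cond s.tail.head s.tail (false ::: true ::: s.tail.tail)) (false ::: s)

def f0inv : XX → XX := fun s =>
  cond s.head (true ::: s)
    (cond s.tail.head (true ::: false ::: s.tail.tail) s.tail)

def f0 : Equiv.Perm XX where
  toFun := f0fun
  invFun := f0inv
  left_inv := by
    intro s
    rw [← Stream'.eta s]
    rcases hb : s.head <;> rw [← Stream'.eta s.tail] <;> rcases hc : s.tail.head <;>
      simp [f0fun, f0inv, Stream'.head_cons, Stream'.tail_cons]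
  right_inv := by
    intro s
    rw [← Stream'.eta s]
    rcases hb : s.head <;> rw [← Stream'.eta s.tail] <;> rcases hc : s.tail.head <;>
      simp [f0fun, f0inv, Stream'.head_cons, Stream'.tail_cons]

@[simp] theorem f0_ff (s : XX) : f0 (false ::: s) = false ::: false ::: s := by
  simp [f0, f0fun, Stream'.head_cons, Stream'.tail_cons]

@[simp] theorem f0_tf (s : XX) : f0 (true ::: false ::: s) = false ::: true ::: s := by
  simp [f0, f0fun, Stream'.head_cons, Stream'.tail_cons]

@[simp] theorem f0_tt (s : XX) : f0 (true ::: true ::: s) = true ::: s := by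
  simp [f0, f0fun, Stream'.head_cons, Stream'.tail_cons]

@[simp] theorem f0_inv_t (s : XX) : f0⁻¹ (true ::: s) = true ::: true ::: s := by
  simp [f0, f0inv, Equiv.Perm.inv_def, Stream'.head_cons, Stream'.tail_cons]

@[simp] theorem f0_inv_ff (s : XX) : f0⁻¹ (false ::: false ::: s) = false ::: s := by
  simp [f0, f0inv, Equiv.Perm.inv_def, Stream'.head_cons, Stream'.tail_cons]

@[simp] theorem f0_inv_ft (s : XX) : f0⁻¹ (false ::: true ::: s) = true ::: false ::: s := by
  simp [f0, f0inv, Equiv.Perm.inv_def, Stream'.head_cons, Stream'.tail_cons]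

/-- The "act inside the right half" operator. -/
def CJ (e : Equiv.Perm XX) : Equiv.Perm XX where
  toFun s := cond s.head (true ::: e s.tail) s
  invFun s := cond s.head (true ::: e.symm s.tail) s
  left_inv := by
    intro s
    rcases hb : s.head
    · simp only [hb, cond_false]
    · simp only [hb, cond_true, Stream'.head_cons, Stream'.tail_cons, Equiv.symm_apply_apply]
      rw [← hb, Stream'.eta]
  right_inv := by
    intro s
    rcases hb : s.head
    · simp only [hb, cond_false]
    · simp only [hb, cond_true, Stream'.head_cons, Stream'.tail_cons, Equiv.apply_symm_apply]
      rw [← hb, Stream'.eta]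

@[simp] theorem CJ_t (e : Equiv.Perm XX) (s : XX) : CJ e (true ::: s) = true ::: e s := by
  simp [CJ, Stream'.head_cons, Stream'.tail_cons]

@[simp] theorem CJ_f (e : Equiv.Perm XX) (s : XX) : CJ e (false ::: s) = false ::: s := by
  simp [CJ, Stream'.head_cons]

theorem CJ_inv (e : Equiv.Perm XX) : (CJ e)⁻¹ = CJ e⁻¹ := rfl

theorem CJ_mul (a b : Equiv.Perm XX) : CJ a * CJ b = CJ (a * b) := by
  refine Equiv.ext fun s => ?_
  rw [← Stream'.eta s]
  rcases hb : s.head <;>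
    simp [Equiv.Perm.mul_apply]

def fp : ℕ → Equiv.Perm XX
  | 0 => f0
  | n + 1 => CJ (fp n)

@[simp] theorem fp_t (n : ℕ) (s : XX) : fp (n + 1) (true ::: s) = true ::: fp n s := by
  show CJ _ _ = _; simp

@[simp] theorem fp_f (n : ℕ) (s : XX) : fp (n + 1) (false ::: s) = false ::: s := by
  show CJ _ _ = _; simp

@[simp] theorem fp_inv_t (n : ℕ) (s : XX) : (fp (n + 1))⁻¹ (true ::: s) = true ::: (fp n)⁻¹ s := by
  show (CJ _)⁻¹ _ = _; rw [CJ_inv]; simp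

@[simp] theorem fp_inv_f (n : ℕ) (s : XX) : (fp (n + 1))⁻¹ (false ::: s) = false ::: s := by
  show (CJ _)⁻¹ _ = _; rw [CJ_inv]; simp

theorem relP0 (d : ℕ) : fp (d + 1) * fp 0 = fp 0 * fp (d + 2) := by
  refine Equiv.ext fun s => ?_
  rw [← Stream'.eta s]
  rcases hb : s.head
  · simp [Equiv.Perm.mul_apply, show fp 0 = f0 from rfl]
  · rw [← Stream'.eta s.tail]
    rcases hc : s.tail.head <;>
      simp [Equiv.Perm.mul_apply, show fp 0 = f0 from rfl]

theorem relP (i d : ℕ) : fp (i + d + 1) * fp i = fp i * fp (i + d + 2) := by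
  induction i with
  | zero => simpa using relP0 d
  | succ k ih =>
    have e1 : k + 1 + d + 1 = (k + d + 1) + 1 := by omega
    have e2 : k + 1 + d + 2 = (k + d + 2) + 1 := by omega
    rw [e1, e2, show fp ((k + d + 1) + 1) = CJ (fp (k + d + 1)) from rfl,
      show fp ((k + d + 2) + 1) = CJ (fp (k + d + 2)) from rfl,
      show fp (k + 1) = CJ (fp k) from rfl, CJ_mul, CJ_mul, ih]

theorem relPAll {i j : ℕ} (h : i < j) : fp j * fp i = fp i * fp (j + 1) := by
  obtain ⟨d, rfl⟩ : ∃ d, j = i + d + 1 := ⟨j - i - 1, by omega⟩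
  have := relP i d
  rwa [show i + d + 2 = (i + d + 1) + 1 from rfl] at this

/-- The standard action of Thompson's group on the Cantor space. -/
def rho : ThompsonF →* Equiv.Perm XX :=
  PresentedGroup.toGroup (f := fp) (by
    rintro r ⟨i, j, hij, rfl⟩
    rw [map_mul, map_mul, map_inv, map_mul]
    simp only [FreeGroup.lift_apply_of]
    rw [mul_inv_eq_one]
    exact relPAll hij)

@[simp] theorem rho_xF (n : ℕ) : rho (xF n) = fp n :=
  PresentedGroup.toGroup.of _



/-! ### The monoid side -/

def mkM (w : List ℕ) : ThompsonM := thompsonCon.mk' (FreeMonoid.ofList w)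

@[simp] theorem mkM_nil : mkM [] = 1 := rfl

@[simp] theorem mkM_cons (a : ℕ) (w : List ℕ) : mkM (a :: w) = xM a * mkM w := by
  rw [mkM, show FreeMonoid.ofList (a :: w) = FreeMonoid.of a * FreeMonoid.ofList w from rfl,
    map_mul]
  rfl

theorem mkM_surj (p : ThompsonM) : ∃ w : List ℕ, mkM w = p := by
  refine Con.induction_on p fun w => ⟨FreeMonoid.toList w, ?_⟩
  simp [mkM, FreeMonoid.ofList_toList]

@[simp] theorem iotaMF_xM (n : ℕ) : iotaMF (xM n) = xF n := by
  show Con.lift _ _ _ (thompsonCon.mk' (FreeMonoid.of n)) = xF n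
  exact FreeMonoid.lift_eval_of xF n

def wpm (w : List ℕ) : Equiv.Perm XX := (w.map fp).prod

@[simp] theorem wpm_nil : wpm [] = 1 := rfl

@[simp] theorem wpm_cons (a : ℕ) (w : List ℕ) : wpm (a :: w) = fp a * wpm w := by
  simp [wpm]

theorem rho_iota_mkM (w : List ℕ) : rho (iotaMF (mkM w)) = wpm w := by
  induction w with
  | nil => simp
  | cons a t ih => simp [map_mul, ih]

/-! ### Insertion sort normal form -/

def ins : ℕ → List ℕ → List ℕ
  | a, [] => [a]
  | a, b :: t => if a ≤ b then a :: b :: t else b :: ins (a + 1) t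

def nf : List ℕ → List ℕ
  | [] => []
  | a :: t => ins a (nf t)

theorem mem_ins {y : ℕ} : ∀ (l : List ℕ) (a : ℕ), y ∈ ins a l → a ≤ y ∨ y ∈ l := by
  intro l
  induction l with
  | nil => intro a h; simp [ins] at h; omega
  | cons b t ih =>
    intro a h
    rw [ins] at h
    by_cases hab : a ≤ b
    · rw [if_pos hab] at h
      rcases List.mem_cons.1 h with h | h
      · omega
      · right; exact h
    · rw [if_neg hab] at h
      rcases List.mem_cons.1 h with h | h
      · right; simp [h]
      · rcases ih (a + 1) h with h | h
        · left; omega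
        · right; simp [h]

theorem ins_sorted : ∀ (l : List ℕ), l.Pairwise (· ≤ ·) → ∀ a, (ins a l).Pairwise (· ≤ ·) := by
  intro l
  induction l with
  | nil => intro _ a; simp [ins]
  | cons b t ih =>
    intro hs a
    rw [List.pairwise_cons] at hs
    rw [ins]
    by_cases hab : a ≤ b
    · rw [if_pos hab, List.pairwise_cons, List.pairwise_cons]
      refine ⟨fun x hx => ?_, hs.1, hs.2⟩
      rcases List.mem_cons.1 hx with h | h
      · omega
      · exact le_trans hab (hs.1 x h)
    · rw [if_neg hab, List.pairwise_cons]
      refine ⟨fun x hx => ?_, ih hs.2 (a + 1)⟩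
      rcases mem_ins t (a + 1) hx with h | h
      · omega
      · exact hs.1 x h

theorem nf_sorted (w : List ℕ) : (nf w).Pairwise (· ≤ ·) := by
  induction w with
  | nil => simp [nf]
  | cons a t ih => exact ins_sorted _ ih a

theorem mkM_ins : ∀ (l : List ℕ) (a : ℕ), mkM (ins a l) = mkM (a :: l) := by
  intro l
  induction l with
  | nil => intro a; rfl
  | cons b t ih =>
    intro a
    rw [ins]
    by_cases hab : a ≤ b
    · rw [if_pos hab]
    · rw [if_neg hab]
      have hba : b < a := by omega
      rw [mkM_cons, ih (a + 1), mkM_cons, mkM_cons, mkM_cons, ← mul_assoc, ← xM_rel hba,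
        mul_assoc]

theorem mkM_nf (w : List ℕ) : mkM (nf w) = mkM w := by
  induction w with
  | nil => rfl
  | cons a t ih => rw [nf, mkM_ins, mkM_cons, ih, mkM_cons]

/-! ### Distinct sorted words act differently -/

def zo (m : ℕ) : XX := fun k => decide (m < k)

theorem zo_head (m : ℕ) : (zo m).head = false := by
  show decide (m < 0) = false
  simp

theorem cons_zo (m : ℕ) : (false ::: zo m) = zo (m + 1) := by
  refine Stream'.ext fun n => ?_
  cases n with
  | zero => rw [show Stream'.get (false ::: zo m) 0 = false from rfl]; simp [zo, Stream'.get]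
  | succ k =>
    rw [Stream'.get_succ_cons]
    show decide (m < k) = decide (m + 1 < k + 1)
    simp

theorem zo_inj {m k : ℕ} (h : zo m = zo k) : m = k := by
  have h1 := congrFun h (k + 1)
  have h2 := congrFun h (m + 1)
  simp only [zo, decide_eq_decide] at h1 h2
  omega

theorem head_false_eq (s : XX) (h : s.head = false) : s = false ::: s.tail := by
  rw [← h, Stream'.eta]

theorem fp_fix {n : ℕ} {s : XX} (h : s.head = false) : fp (n + 1) s = s := by
  rw [head_false_eq s h, fp_f]

theorem f0_zo (m : ℕ) : f0 (zo m) = zo (m + 1) := by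
  rw [head_false_eq (zo m) (zo_head m), f0_ff, ← head_false_eq (zo m) (zo_head m), cons_zo]

theorem wpm_fix : ∀ (w : List ℕ), (∀ a ∈ w, a ≠ 0) → ∀ s : XX, s.head = false → wpm w s = s := by
  intro w
  induction w with
  | nil => intro _ s _; simp
  | cons a t ih =>
    intro h s hs
    obtain ⟨b, rfl⟩ : ∃ b, a = b + 1 := by
      have := h a (by simp); exact ⟨a - 1, by omega⟩
    rw [wpm_cons, Equiv.Perm.mul_apply, ih (fun x hx => h x (by simp [hx])) s hs, fp_fix hs]

theorem wpm_zo (w : List ℕ) (hw : w.Pairwise (· ≤ ·)) : wpm w (zo 0) = zo (w.count 0) := by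
  induction w with
  | nil => simp
  | cons a t ih =>
    rw [List.pairwise_cons] at hw
    cases a with
    | zero =>
      rw [wpm_cons, Equiv.Perm.mul_apply, ih hw.2, show fp 0 = f0 from rfl, f0_zo]
      simp [List.count_cons]
    | succ b =>
      have hall : ∀ x ∈ (b + 1) :: t, x ≠ 0 := by
        intro x hx
        rcases List.mem_cons.1 hx with h | h
        · omega
        · have := hw.1 x h; omega
      rw [wpm_fix _ hall _ (zo_head 0)]
      have : (0 : ℕ) ∉ (b + 1) :: t := fun hc => hall 0 hc rfl
      rw [List.count_eq_zero.2 this]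

theorem wpm_pred : ∀ (w : List ℕ), (∀ a ∈ w, a ≠ 0) → ∀ s : XX,
    wpm w (true ::: s) = true ::: wpm (w.map Nat.pred) s := by
  intro w
  induction w with
  | nil => intro _ s; simp
  | cons a t ih =>
    intro h s
    obtain ⟨b, rfl⟩ : ∃ b, a = b + 1 := by
      have := h a (by simp); exact ⟨a - 1, by omega⟩
    rw [List.map_cons, wpm_cons, Equiv.Perm.mul_apply, ih (fun x hx => h x (by simp [hx])) s,
      fp_t, wpm_cons, Equiv.Perm.mul_apply]
    rfl

theorem map_pred_succ (w : List ℕ) (h : ∀ a ∈ w, a ≠ 0) :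
    (w.map Nat.pred).map Nat.succ = w := by
  induction w with
  | nil => rfl
  | cons a t ih =>
    have ha := h a (by simp)
    simp only [List.map_cons]
    rw [ih (fun x hx => h x (by simp [hx]))]
    congr 1
    exact Nat.succ_pred_eq_of_pos (by omega)

theorem sum_map_pred (w : List ℕ) (h : ∀ a ∈ w, a ≠ 0) :
    (w.map Nat.pred).sum + w.length = w.sum := by
  induction w with
  | nil => rfl
  | cons a t ih =>
    have ha := h a (by simp)
    have := ih (fun x hx => h x (by simp [hx]))
    simp only [List.map_cons, List.sum_cons, List.length_cons, Nat.pred_eq_sub_one]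
    omega

theorem sorted_map_pred {w : List ℕ} (h : w.Pairwise (· ≤ ·)) :
    (w.map Nat.pred).Pairwise (· ≤ ·) :=
  List.Pairwise.map _ (fun _ _ hab => Nat.pred_le_pred hab) h

theorem wpm_injOn : ∀ (N : ℕ) (u v : List ℕ), u.sum + v.sum + u.length + v.length ≤ N →
    u.Pairwise (· ≤ ·) → v.Pairwise (· ≤ ·) → wpm u = wpm v → u = v := by
  intro N
  induction N using Nat.strong_induction_on with
  | _ N IH =>
    intro u v hN hu hv heq
    have hcount : u.count 0 = v.count 0 := by
      apply zo_inj
      rw [← wpm_zo u hu, ← wpm_zo v hv, heq]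
    by_cases h0 : (0 : ℕ) ∈ u
    · have h0v : (0 : ℕ) ∈ v := by
        rw [← List.count_pos_iff] at h0 ⊢
        omega
      obtain ⟨a, u', rfl⟩ : ∃ a u', u = a :: u' := by
        cases u with
        | nil => simp at h0
        | cons a u' => exact ⟨a, u', rfl⟩
      obtain ⟨b, v', rfl⟩ : ∃ b v', v = b :: v' := by
        cases v with
        | nil => simp at h0v
        | cons b v' => exact ⟨b, v', rfl⟩
      have ha : a = 0 := by
        rcases List.mem_cons.1 h0 with h | h
        · omega
        · have := List.rel_of_pairwise_cons hu h; omega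
      have hb : b = 0 := by
        rcases List.mem_cons.1 h0v with h | h
        · omega
        · have := List.rel_of_pairwise_cons hv h; omega
      subst ha hb
      rw [wpm_cons, wpm_cons] at heq
      have heq' : wpm u' = wpm v' := mul_left_cancel heq
      have hrec : u' = v' := by
        refine IH (N - 2) (by simp at hN ⊢; omega) u' v' ?_ hu.of_cons hv.of_cons heq'
        simp at hN ⊢
        omega
      rw [hrec]
    · have h0v : (0 : ℕ) ∉ v := by
        rw [← List.count_pos_iff] at h0 ⊢
        omega
      have hnu : ∀ a ∈ u, a ≠ 0 := fun a ha h => h0 (h ▸ ha)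
      have hnv : ∀ a ∈ v, a ≠ 0 := fun a ha h => h0v (h ▸ ha)
      by_cases hev : u = [] ∧ v = []
      · rw [hev.1, hev.2]
      · have hlen : 1 ≤ u.length + v.length := by
          rcases u with _ | ⟨a, t⟩
          · rcases v with _ | ⟨b, t2⟩
            · exact absurd ⟨rfl, rfl⟩ hev
            · simp only [List.length_cons]; omega
          · simp only [List.length_cons]; omega
        have heq2 : wpm (u.map Nat.pred) = wpm (v.map Nat.pred) := by
          refine Equiv.ext fun s => ?_
          have h1 : wpm u (true ::: s) = wpm v (true ::: s) := by rw [heq]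
          rw [wpm_pred u hnu s, wpm_pred v hnv s] at h1
          exact Stream'.cons_injective_right true h1
        have hsum_u := sum_map_pred u hnu
        have hsum_v := sum_map_pred v hnv
        have hrec : u.map Nat.pred = v.map Nat.pred := by
          refine IH (u.sum + v.sum) (by omega) _ _ ?_ (sorted_map_pred hu) (sorted_map_pred hv)
            heq2
          rw [List.length_map, List.length_map]
          omega
        calc u = (u.map Nat.pred).map Nat.succ := (map_pred_succ u hnu).symm
          _ = (v.map Nat.pred).map Nat.succ := by rw [hrec]
          _ = v := map_pred_succ v hnv



/-! ### Common right multiples and the positive decomposition -/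

theorem lemA : ∀ (w : List ℕ) (k : ℕ), ∃ u v : ThompsonM, xM k * u = mkM w * v := by
  intro w
  induction w with
  | nil => intro k; exact ⟨1, xM k, by simp⟩
  | cons j t ih =>
    intro k
    rcases lt_trichotomy k j with h | h | h
    · obtain ⟨u, v, huv⟩ := ih k
      refine ⟨xM (j + 1) * u, v, ?_⟩
      rw [mkM_cons, ← mul_assoc, ← xM_rel h, mul_assoc, huv, mul_assoc]
    · subst h
      exact ⟨mkM t, 1, by rw [mkM_cons, mul_one]⟩
    · obtain ⟨u, v, huv⟩ := ih (k + 1)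
      refine ⟨xM j * u, v, ?_⟩
      rw [mkM_cons, ← mul_assoc, xM_rel h, mul_assoc, huv, mul_assoc]

theorem crmL : ∀ (a : List ℕ) (b : List ℕ), ∃ u v : ThompsonM, mkM a * u = mkM b * v := by
  intro a
  induction a with
  | nil => intro b; exact ⟨mkM b, 1, by simp⟩
  | cons k t ih =>
    intro b
    obtain ⟨u1, v1, h1⟩ := lemA b k
    obtain ⟨w1, hw1⟩ := mkM_surj u1
    obtain ⟨u2, v2, h2⟩ := ih w1
    refine ⟨u2, v1 * v2, ?_⟩
    rw [mkM_cons, mul_assoc, h2, hw1, ← mul_assoc, h1, mul_assoc]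

theorem crm (p q : ThompsonM) : ∃ u v : ThompsonM, p * u = q * v := by
  obtain ⟨a, rfl⟩ := mkM_surj p
  obtain ⟨b, rfl⟩ := mkM_surj q
  exact crmL a b

theorem swapF (q r : ThompsonM) :
    ∃ u v : ThompsonM, (iotaMF q)⁻¹ * iotaMF r = iotaMF u * (iotaMF v)⁻¹ := by
  obtain ⟨u, v, huv⟩ := crm r q
  refine ⟨v, u, ?_⟩
  have h2 : iotaMF r * iotaMF u = iotaMF q * iotaMF v := by
    rw [← map_mul, ← map_mul, huv]
  rw [inv_mul_eq_iff_eq_mul, ← mul_assoc, ← h2, mul_assoc, mul_inv_cancel, mul_one]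

theorem decompF (h : ThompsonF) : ∃ p q : ThompsonM, h = iotaMF p * (iotaMF q)⁻¹ := by
  obtain ⟨z, rfl⟩ := PresentedGroup.mk_surjective thompsonRels h
  induction z using FreeGroup.induction_on with
  | C1 => exact ⟨1, 1, by simp⟩
  | of x => exact ⟨xM x, 1, by simp [iotaMF_xM]; rfl⟩
  | inv_of x _ =>
    refine ⟨1, xM x, by simp [iotaMF_xM]; rfl⟩
  | mul x y hx hy =>
    obtain ⟨p1, q1, h1⟩ := hx
    obtain ⟨p2, q2, h2⟩ := hy
    obtain ⟨u, v, huv⟩ := swapF q1 p2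
    refine ⟨p1 * u, q2 * v, ?_⟩
    rw [map_mul (PresentedGroup.mk thompsonRels), h1, h2]
    have expand : iotaMF p1 * (iotaMF q1)⁻¹ * (iotaMF p2 * (iotaMF q2)⁻¹)
        = iotaMF p1 * ((iotaMF q1)⁻¹ * iotaMF p2) * (iotaMF q2)⁻¹ := by group
    rw [expand, huv, map_mul, map_mul, mul_inv_rev]
    group

theorem rho_faithful {h : ThompsonF} (hh : rho h = 1) : h = 1 := by
  obtain ⟨p, q, rfl⟩ := decompF h
  obtain ⟨wp, rfl⟩ := mkM_surj p
  obtain ⟨wq, rfl⟩ := mkM_surj q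
  have hpq : rho (iotaMF (mkM wp)) = rho (iotaMF (mkM wq)) := by
    rw [map_mul, map_inv, mul_inv_eq_one] at hh
    exact hh
  have hwpm : wpm (nf wp) = wpm (nf wq) := by
    rw [← rho_iota_mkM, ← rho_iota_mkM, mkM_nf, mkM_nf]
    exact hpq
  have hnf : nf wp = nf wq := by
    refine wpm_injOn ((nf wp).sum + (nf wq).sum + (nf wp).length + (nf wq).length) _ _ le_rfl
      (nf_sorted wp) (nf_sorted wq) hwpm
  have : mkM wp = mkM wq := by
    rw [← mkM_nf wp, ← mkM_nf wq, hnf]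
  rw [this, mul_inv_cancel]

theorem rho_inj {a b : ThompsonF} (hab : rho a = rho b) : a = b := by
  have : rho (a * b⁻¹) = 1 := by rw [map_mul, map_inv, hab, mul_inv_cancel]
  have := rho_faithful this
  rw [mul_inv_eq_one] at this
  exact this



/-! ### The squeezing embedding of the Cantor space into itself -/

def inC (s : XX) : Prop :=
  ¬(s.head = true ∧ s.tail.head = true ∧ s.tail.tail.head = true)

instance : DecidablePred inC := fun s => by unfold inC; infer_instance

def cfun (u : XX) : XX :=
  cond u.head (cond u.tail.head (true ::: true ::: false ::: u.tail.tail) u) u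

def cinv (s : XX) : XX :=
  cond s.head
    (cond s.tail.head (cond s.tail.tail.head s (true ::: true ::: s.tail.tail.tail)) s) s

theorem dest (s : XX) : ∃ (b : Bool) (t : XX), s = b ::: t := ⟨s.head, s.tail, (Stream'.eta s).symm⟩

@[simp] theorem cfun_f (w : XX) : cfun (false ::: w) = false ::: w := by
  simp [cfun, Stream'.head_cons]

@[simp] theorem cfun_tf (w : XX) : cfun (true ::: false ::: w) = true ::: false ::: w := by
  simp [cfun, Stream'.head_cons, Stream'.tail_cons]

@[simp] theorem cfun_tt (w : XX) :
    cfun (true ::: true ::: w) = true ::: true ::: false ::: w := by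
  simp [cfun, Stream'.head_cons, Stream'.tail_cons]

theorem inC_f (w : XX) : inC (false ::: w) := by
  simp [inC, Stream'.head_cons]

theorem inC_tf (w : XX) : inC (true ::: false ::: w) := by
  simp [inC, Stream'.head_cons, Stream'.tail_cons]

theorem inC_ttf (w : XX) : inC (true ::: true ::: false ::: w) := by
  simp [inC, Stream'.head_cons, Stream'.tail_cons]

theorem inC_cfun (u : XX) : inC (cfun u) := by
  obtain ⟨b0, u, rfl⟩ := dest u
  obtain ⟨b1, u, rfl⟩ := dest u
  cases b0
  · exact inC_f _
  · cases b1
    · exact inC_tf _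
    · rw [cfun_tt]; exact inC_ttf _

def cEmb : XX ≃ {s : XX // inC s} where
  toFun u := ⟨cfun u, inC_cfun u⟩
  invFun s := cinv s.val
  left_inv := by
    intro u
    obtain ⟨b0, u, rfl⟩ := dest u
    obtain ⟨b1, u, rfl⟩ := dest u
    cases b0
    · simp [cfun, cinv, Stream'.head_cons, Stream'.tail_cons]
    · cases b1
      · simp [cfun, cinv, Stream'.head_cons, Stream'.tail_cons]
      · simp [cfun, cinv, Stream'.head_cons, Stream'.tail_cons]
  right_inv := by
    rintro ⟨s, hs⟩
    apply Subtype.ext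
    show cfun (cinv s) = s
    obtain ⟨b0, s, rfl⟩ := dest s
    obtain ⟨b1, s, rfl⟩ := dest s
    obtain ⟨b2, s, rfl⟩ := dest s
    cases b0
    · simp [cfun, cinv, Stream'.head_cons, Stream'.tail_cons]
    · cases b1
      · simp [cfun, cinv, Stream'.head_cons, Stream'.tail_cons]
      · cases b2
        · simp [cfun, cinv, Stream'.head_cons, Stream'.tail_cons]
        · exact absurd (by simp [Stream'.head_cons, Stream'.tail_cons]) hs

theorem cEmb_val (u : XX) : (cEmb u : XX) = cfun u := rfl

/-- Conjugation of permutations of the Cantor set by the squeezing embedding. -/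
def ThetaH : Equiv.Perm XX →* Equiv.Perm XX := Equiv.Perm.extendDomainHom cEmb

theorem fp2inv : (fp 2)⁻¹ = CJ (CJ f0⁻¹) := by
  rw [show fp 2 = CJ (CJ f0) from rfl, CJ_inv, CJ_inv]

theorem key_image (e : Equiv.Perm XX) (u : XX) :
    ThetaH e ((cEmb u : XX)) = (cEmb (e u) : XX) := by
  show (Equiv.Perm.extendDomain e cEmb) _ = _
  exact Equiv.Perm.extendDomain_apply_image e cEmb u

theorem key_not (e : Equiv.Perm XX) {s : XX} (hs : ¬inC s) : ThetaH e s = s := by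
  show (Equiv.Perm.extendDomain e cEmb) _ = _
  exact Equiv.Perm.extendDomain_apply_not_subtype e cEmb hs

theorem key1 : fp 0 * (fp 2)⁻¹ = ThetaH (fp 0) := by
  refine Equiv.ext fun s => ?_
  by_cases hs : inC s
  · obtain ⟨u, rfl⟩ : ∃ u, (cEmb u : XX) = s :=
      ⟨cEmb.symm ⟨s, hs⟩, congrArg Subtype.val (cEmb.apply_symm_apply ⟨s, hs⟩)⟩
    rw [key_image, cEmb_val, cEmb_val]
    obtain ⟨b0, u, rfl⟩ := dest u
    cases b0
    · simp [Equiv.Perm.mul_apply, fp2inv, show fp 0 = f0 from rfl]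
    · obtain ⟨b1, u, rfl⟩ := dest u
      cases b1
      · simp [Equiv.Perm.mul_apply, fp2inv, show fp 0 = f0 from rfl]
      · obtain ⟨b2, u, rfl⟩ := dest u
        cases b2 <;>
          simp [Equiv.Perm.mul_apply, fp2inv, show fp 0 = f0 from rfl]
  · rw [key_not _ hs]
    have hb : s.head = true ∧ s.tail.head = true ∧ s.tail.tail.head = true := by
      by_contra hc
      exact hs hc
    obtain ⟨b0, s, rfl⟩ := dest s
    obtain ⟨b1, s, rfl⟩ := dest s
    obtain ⟨b2, s, rfl⟩ := dest s
    simp only [Stream'.head_cons, Stream'.tail_cons] at hb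
    obtain ⟨rfl, rfl, rfl⟩ := hb
    simp [Equiv.Perm.mul_apply, fp2inv, show fp 0 = f0 from rfl]

theorem key2 : fp 1 * (fp 2)⁻¹ = ThetaH (fp 1) := by
  refine Equiv.ext fun s => ?_
  by_cases hs : inC s
  · obtain ⟨u, rfl⟩ : ∃ u, (cEmb u : XX) = s :=
      ⟨cEmb.symm ⟨s, hs⟩, congrArg Subtype.val (cEmb.apply_symm_apply ⟨s, hs⟩)⟩
    rw [key_image, cEmb_val, cEmb_val]
    obtain ⟨b0, u, rfl⟩ := dest u
    cases b0
    · simp [Equiv.Perm.mul_apply, fp2inv, show fp 1 = CJ f0 from rfl]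
    · obtain ⟨b1, u, rfl⟩ := dest u
      cases b1
      · simp [Equiv.Perm.mul_apply, fp2inv, show fp 1 = CJ f0 from rfl]
      · obtain ⟨b2, u, rfl⟩ := dest u
        cases b2 <;>
          simp [Equiv.Perm.mul_apply, fp2inv, show fp 1 = CJ f0 from rfl]
  · rw [key_not _ hs]
    have hb : s.head = true ∧ s.tail.head = true ∧ s.tail.tail.head = true := by
      by_contra hc
      exact hs hc
    obtain ⟨b0, s, rfl⟩ := dest s
    obtain ⟨b1, s, rfl⟩ := dest s
    obtain ⟨b2, s, rfl⟩ := dest s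
    simp only [Stream'.head_cons, Stream'.tail_cons] at hb
    obtain ⟨rfl, rfl, rfl⟩ := hb
    simp [Equiv.Perm.mul_apply, fp2inv, show fp 1 = CJ f0 from rfl]

/-! ### The twisted generators and the endomorphism -/

def gg : ℕ → ThompsonF
  | 0 => xF 0 * (xF 2)⁻¹
  | 1 => xF 1 * (xF 2)⁻¹
  | n + 2 => (xF 0 * (xF 2)⁻¹)⁻¹ * gg (n + 1) * (xF 0 * (xF 2)⁻¹)

theorem rho_gg0 : rho (gg 0) = ThetaH (fp 0) := by
  rw [show gg 0 = xF 0 * (xF 2)⁻¹ from rfl, map_mul, map_inv, rho_xF, rho_xF, key1]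

theorem rho_gg1 : rho (gg 1) = ThetaH (fp 1) := by
  rw [show gg 1 = xF 1 * (xF 2)⁻¹ from rfl, map_mul, map_inv, rho_xF, rho_xF, key2]

theorem rho_gg : ∀ n, rho (gg n) = ThetaH (fp n) := by
  intro n
  induction n with
  | zero => exact rho_gg0
  | succ m ih =>
    cases m with
    | zero => exact rho_gg1
    | succ k =>
      have hgg : gg (k + 2) = (gg 0)⁻¹ * gg (k + 1) * gg 0 := rfl
      have hfp : fp (k + 2) = (fp 0)⁻¹ * fp (k + 1) * fp 0 := by
        have h1 : fp (k + 1) * fp 0 = fp 0 * fp (k + 2) := relPAll (Nat.succ_pos k)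
        rw [mul_assoc, h1, inv_mul_cancel_left]
      rw [hgg, map_mul, map_mul, map_inv, ih, rho_gg0, hfp, map_mul, map_mul, map_inv]

theorem gg_rel {i j : ℕ} (h : i < j) : gg j * gg i = gg i * gg (j + 1) := by
  apply rho_inj
  simp only [map_mul, rho_gg]
  rw [← map_mul, ← map_mul, relPAll h]

def psiF : ThompsonF →* ThompsonF :=
  PresentedGroup.toGroup (f := gg) (by
    rintro r ⟨i, j, hij, rfl⟩
    rw [map_mul, map_mul, map_inv, map_mul]
    simp only [FreeGroup.lift_apply_of]
    rw [mul_inv_eq_one]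
    exact gg_rel hij)

@[simp] theorem psiF_xF (n : ℕ) : psiF (xF n) = gg n :=
  PresentedGroup.toGroup.of _

theorem psiF_inj : Function.Injective psiF := by
  have hcomp : rho.comp psiF = ThetaH.comp rho := by
    apply PresentedGroup.ext
    intro n
    show rho (psiF (xF n)) = ThetaH (rho (xF n))
    rw [psiF_xF, rho_xF, rho_gg]
  rw [injective_iff_map_eq_one]
  intro a ha
  have h1 : ThetaH (rho a) = 1 := by
    have := congrArg (fun f => f a) hcomp
    simp only [MonoidHom.comp_apply] at this
    rw [← this, ha, map_one]
  have h2 : rho a = 1 := by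
    have := Equiv.Perm.extendDomain_eq_one_iff.mp h1
    exact this
  exact rho_faithful h2

end Stmt4Aux

/-- the map `x_0 ↦ x_0 x_2⁻¹`, `x_1 ↦ x_1 x_2⁻¹` extends to an
injective endomorphism of Thompson's group `F`. -/
theorem stmt4 :
    ∃ ψ : ThompsonF →* ThompsonF, Function.Injective ψ ∧
      ψ (xF 0) = xF 0 * (xF 2)⁻¹ ∧ ψ (xF 1) = xF 1 * (xF 2)⁻¹ := by
  exact ⟨Stmt4Aux.psiF, Stmt4Aux.psiF_inj, Stmt4Aux.psiF_xF 0, Stmt4Aux.psiF_xF 1⟩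
end

section
/- Let b be a homogeneous element of degree d in the monoid ring K[M] of Thompson's monoid M, written as a polynomial in the generators x_i, ..., x_{i+s}. Then for any m > s, φ^m(b)·b = b·φ^{m+d}(b) in K[M], where φ is the shift endomorphism. In particular, the right ideals bR and φ^m(b)R have nonzero intersection when b ≠ 0. -/
/-- Insertion of a letter into a reversed normal-form list. -/
def insR (a : ℕ) : List ℕ → List ℕ
  | [] => [a]
  | c :: t => if a < c then (c + 1) :: insR a t else a :: c :: t

lemma insR_braid {i j : ℕ} (h : i < j) (l : List ℕ) :
    insR i (insR j l) = insR (j + 1) (insR i l) := by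
  induction l with
  | nil =>
    simp only [insR, if_pos h]
    rw [if_neg (by omega)]
  | cons c t ih =>
    by_cases hjc : j < c
    · have hic : i < c := h.trans hjc
      simp only [insR, if_pos hjc, if_pos hic, if_pos (Nat.lt_of_lt_of_le hic (Nat.le_succ c)),
        if_pos (Nat.succ_lt_succ hjc), ih]
    · by_cases hic : i < c
      · have h2 : ¬ j + 1 < c + 1 := by omega
        simp only [insR, if_neg hjc, if_pos hic, if_pos h, if_neg h2, if_pos hic]
      · have h1 : ¬ j + 1 < i := by omega
        simp only [insR, if_neg hjc, if_neg hic, if_pos h, if_neg h1, if_neg hic]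

lemma insR_length (a : ℕ) (l : List ℕ) : (insR a l).length = l.length + 1 := by
  induction l with
  | nil => rfl
  | cons c t ih => by_cases h : a < c <;> simp [insR, h, ih]

lemma insR_le {C a : ℕ} {l : List ℕ} (hl : ∀ x ∈ l, x ≤ C) (ha : a ≤ C) :
    ∀ x ∈ insR a l, x ≤ C + 1 := by
  induction l with
  | nil => simpa [insR] using by omega
  | cons c t ih =>
    intro x hx
    by_cases h : a < c
    · rw [insR, if_pos h] at hx
      rcases List.mem_cons.1 hx with rfl | hx
      · have := hl c (by simp); omega
      · exact ih (fun y hy => hl y (List.mem_cons_of_mem _ hy)) x hx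
    · rw [insR, if_neg h] at hx
      rcases List.mem_cons.1 hx with rfl | hx
      · omega
      · have := hl x hx; omega

lemma insR_ge {N a : ℕ} {l : List ℕ} (hl : ∀ x ∈ l, N ≤ x) (ha : N ≤ a) :
    ∀ x ∈ insR a l, N ≤ x := by
  induction l with
  | nil => simpa [insR]
  | cons c t ih =>
    intro x hx
    by_cases h : a < c
    · rw [insR, if_pos h] at hx
      rcases List.mem_cons.1 hx with rfl | hx
      · have := hl c (by simp); omega
      · exact ih (fun y hy => hl y (List.mem_cons_of_mem _ hy)) x hx
    · rw [insR, if_neg h] at hx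
      rcases List.mem_cons.1 hx with rfl | hx
      · exact ha
      · exact hl x hx

lemma insR_split {N a : ℕ} {l1 l2 : List ℕ} (h1 : ∀ x ∈ l1, N ≤ x) (h2 : ∀ x ∈ l2, x < N)
    (ha : N ≤ a) : insR a (l1 ++ l2) = insR a l1 ++ l2 := by
  induction l1 with
  | nil =>
    cases l2 with
    | nil => rfl
    | cons c t =>
      have : ¬ a < c := by have := h2 c (by simp); omega
      simp [insR, this]
  | cons c t ih =>
    by_cases h : a < c
    · simp [insR, h, ih (fun y hy => h1 y (List.mem_cons_of_mem _ hy))]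
    · simp [insR, h]

lemma insR_map_succ (a : ℕ) (l : List ℕ) :
    insR (a + 1) (l.map Nat.succ) = (insR a l).map Nat.succ := by
  induction l with
  | nil => rfl
  | cons c t ih =>
    by_cases h : a < c
    · simp only [List.map_cons, insR, if_pos (Nat.succ_lt_succ h), if_pos h, ih, Nat.succ_eq_add_one]
    · have : ¬ a + 1 < c + 1 := by omega
      simp [insR, h, this, Nat.succ_eq_add_one]
/-- The insertion action, as a hom from the free monoid to (End (List ℕ))ᵐᵒᵖ. -/
def actHom : FreeMonoid ℕ →* (Function.End (List ℕ))ᵐᵒᵖ :=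
  FreeMonoid.lift fun a => MulOpposite.op (insR a)

def nfHom : ThompsonM →* (Function.End (List ℕ))ᵐᵒᵖ :=
  Con.lift _ actHom (by
    apply Con.conGen_le.2
    rintro a b ⟨i, j, hij, rfl, rfl⟩
    simp only [Con.ker_rel, actHom, map_mul, FreeMonoid.lift_eval_of]
    exact congrArg MulOpposite.op (funext fun l => insR_braid hij l))

/-- The action of `g : ThompsonM` on lists. -/
def AA (g : ThompsonM) : List ℕ → List ℕ := (nfHom g).unop

/-- The (reversed) normal form. -/
def nfr (g : ThompsonM) : List ℕ := AA g []

lemma AA_mul (g h : ThompsonM) : AA (g * h) = AA h ∘ AA g := by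
  simp only [AA, map_mul, MulOpposite.unop_mul]
  rfl

lemma AA_one : AA 1 = id := by simp [AA]; rfl

lemma AA_x (a : ℕ) (l : List ℕ) : AA (xM a) l = insR a l := by
  simp only [AA, xM, nfHom, Con.lift_mk', actHom, FreeMonoid.lift_eval_of]
  rfl

lemma mk_insR (a : ℕ) (rl : List ℕ) :
    thompsonCon.mk' (FreeMonoid.ofList (insR a rl).reverse) =
      thompsonCon.mk' (FreeMonoid.ofList rl.reverse) * xM a := by
  induction rl with
  | nil => simp [insR, xM]
  | cons c t ih =>
    by_cases h : a < c
    · rw [insR, if_pos h]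
      have hrel : xM c * xM a = xM a * xM (c + 1) := by
        rw [xM, xM, xM, ← map_mul, ← map_mul]
        exact (Con.eq _).2 (ConGen.Rel.of _ _ ⟨a, c, h, rfl, rfl⟩)
      calc thompsonCon.mk' (FreeMonoid.ofList ((c+1) :: insR a t).reverse)
          = thompsonCon.mk' (FreeMonoid.ofList ((insR a t).reverse ++ [c+1])) := by
            simp
        _ = thompsonCon.mk' (FreeMonoid.ofList (insR a t).reverse) * xM (c+1) := by
            rw [FreeMonoid.ofList_append, map_mul]; rfl
        _ = thompsonCon.mk' (FreeMonoid.ofList t.reverse) * xM a * xM (c+1) := by rw [ih]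
        _ = thompsonCon.mk' (FreeMonoid.ofList t.reverse) * (xM c * xM a) := by
            rw [hrel, mul_assoc]
        _ = thompsonCon.mk' (FreeMonoid.ofList (c :: t).reverse) * xM a := by
            rw [← mul_assoc]
            congr 1
            rw [List.reverse_cons, FreeMonoid.ofList_append, map_mul]
            rfl
    · rw [insR, if_neg h, List.reverse_cons, FreeMonoid.ofList_append, map_mul]
      rfl
lemma mlen_mul (a b : ThompsonM) : mlen (a * b) = mlen a + mlen b := by
  simp [mlen, map_mul]

lemma mlen_one : mlen (1 : ThompsonM) = 0 := by simp [mlen]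

lemma mlen_xM (n : ℕ) : mlen (xM n) = 1 := by
  simp [mlen, xM, lenM, Con.lift_mk', lenHom]
  rfl

lemma AA_section (w : FreeMonoid ℕ) : ∀ rl : List ℕ,
    thompsonCon.mk' (FreeMonoid.ofList (AA (thompsonCon.mk' w) rl).reverse) =
      thompsonCon.mk' (FreeMonoid.ofList rl.reverse) * thompsonCon.mk' w := by
  induction w using FreeMonoid.inductionOn' with
  | one => intro rl; simp [AA_one]
  | of_mul a w ih =>
    intro rl
    rw [map_mul]
    have hx : thompsonCon.mk' (FreeMonoid.of a) = xM a := rfl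
    rw [hx, AA_mul, Function.comp_apply, AA_x, ih (insR a rl), mk_insR, mul_assoc]

lemma nfr_section (g : ThompsonM) :
    thompsonCon.mk' (FreeMonoid.ofList (nfr g).reverse) = g := by
  obtain ⟨w, rfl⟩ := Con.mk'_surjective g
  simpa [nfr] using AA_section w []

lemma nfr_injective : Function.Injective nfr := by
  intro g g' h
  rw [← nfr_section g, ← nfr_section g', h]

lemma AA_length (g : ThompsonM) : ∀ rl : List ℕ, (AA g rl).length = rl.length + mlen g := by
  obtain ⟨w, rfl⟩ := Con.mk'_surjective g
  induction w using FreeMonoid.inductionOn' with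
  | one => intro rl; simp [AA_one, mlen_one]
  | of_mul a w ih =>
    intro rl
    rw [map_mul]
    have hx : thompsonCon.mk' (FreeMonoid.of a) = xM a := rfl
    rw [hx, AA_mul, Function.comp_apply, AA_x, ih (insR a rl), mlen_mul, mlen_xM, insR_length]
    omega

lemma nfr_length (g : ThompsonM) : (nfr g).length = mlen g := by
  simpa [nfr] using AA_length g []

lemma shiftM_mk' (w : FreeMonoid ℕ) :
    shiftM (thompsonCon.mk' w) = thompsonCon.mk' (FreeMonoid.map Nat.succ w) :=
  Con.lift_mk' _ _

lemma shiftM_x (n : ℕ) : shiftM (xM n) = xM (n + 1) := by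
  rw [xM, shiftM_mk', FreeMonoid.map_of]
  rfl

lemma AA_shift (g : ThompsonM) : ∀ rl : List ℕ,
    AA (shiftM g) (rl.map Nat.succ) = (AA g rl).map Nat.succ := by
  obtain ⟨w, rfl⟩ := Con.mk'_surjective g
  induction w using FreeMonoid.inductionOn' with
  | one => intro rl; simp [AA_one, map_one]
  | of_mul a w ih =>
    intro rl
    rw [map_mul, map_mul]
    have hx : thompsonCon.mk' (FreeMonoid.of a) = xM a := rfl
    rw [hx, shiftM_x, AA_mul, AA_mul, Function.comp_apply, Function.comp_apply, AA_x, AA_x,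
      insR_map_succ, ih]

lemma nfr_shift (g : ThompsonM) : nfr (shiftM g) = (nfr g).map Nat.succ := by
  simpa [nfr] using AA_shift g []

lemma shiftM_injective : Function.Injective shiftM := by
  intro g g' h
  apply nfr_injective
  have := congrArg nfr h
  rw [nfr_shift, nfr_shift] at this
  exact List.map_injective_iff.2 Nat.succ_injective this

lemma mlen_shift (g : ThompsonM) : mlen (shiftM g) = mlen g := by
  rw [← nfr_length, ← nfr_length, nfr_shift, List.length_map]

lemma shift_iter_x (k n : ℕ) : (⇑shiftM)^[k] (xM n) = xM (n + k) := by
  induction k with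
  | zero => rfl
  | succ k ih => rw [Function.iterate_succ_apply', ih, shiftM_x, Nat.add_assoc]

lemma shift_iter_mul (k : ℕ) (a b : ThompsonM) :
    (⇑shiftM)^[k] (a * b) = (⇑shiftM)^[k] a * (⇑shiftM)^[k] b := by
  induction k generalizing a b with
  | zero => rfl
  | succ k ih =>
    rw [Function.iterate_succ_apply, map_mul, ih, ← Function.iterate_succ_apply,
      ← Function.iterate_succ_apply]

lemma shift_iter_one (k : ℕ) : (⇑shiftM)^[k] (1 : ThompsonM) = 1 := by
  induction k with
  | zero => rfl
  | succ k ih => rw [Function.iterate_succ_apply, map_one, ih]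

lemma shift_iter_injective (k : ℕ) : Function.Injective ((⇑shiftM)^[k]) :=
  Function.Injective.iterate shiftM_injective k

lemma mlen_shift_iter (k : ℕ) (g : ThompsonM) : mlen ((⇑shiftM)^[k] g) = mlen g := by
  induction k with
  | zero => rfl
  | succ k ih =>
    rw [Function.iterate_succ_apply', mlen_shift, ih]
lemma AA_upper {B : ℕ} {g : ThompsonM}
    (hg : g ∈ Submonoid.closure {h : ThompsonM | ∃ t : ℕ, t ≤ B ∧ h = xM t}) :
    ∀ (rl : List ℕ) (C : ℕ), B ≤ C → (∀ x ∈ rl, x ≤ C) →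
      ∀ x ∈ AA g rl, x ≤ C + mlen g := by
  induction hg using Submonoid.closure_induction with
  | mem g hgmem =>
    obtain ⟨t, htB, rfl⟩ := hgmem
    intro rl C hBC hrl x hx
    rw [AA_x] at hx
    rw [mlen_xM]
    exact insR_le hrl (htB.trans hBC) x hx
  | one =>
    intro rl C hBC hrl x hx
    rw [AA_one] at hx
    simpa [mlen_one] using hrl x hx
  | mul g1 g2 hg1 hg2 ih1 ih2 =>
    intro rl C hBC hrl x hx
    rw [AA_mul, Function.comp_apply] at hx
    rw [mlen_mul, ← Nat.add_assoc]
    exact ih2 (AA g1 rl) (C + mlen g1) (by omega) (ih1 rl C hBC hrl) x hx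

lemma AA_lower_split {N : ℕ} {h : ThompsonM}
    (hh : h ∈ Submonoid.closure {g : ThompsonM | ∃ t : ℕ, N ≤ t ∧ g = xM t}) :
    ∀ (rl1 rl2 : List ℕ), (∀ x ∈ rl1, N ≤ x) → (∀ x ∈ rl2, x < N) →
      AA h (rl1 ++ rl2) = AA h rl1 ++ rl2 ∧ (∀ x ∈ AA h rl1, N ≤ x) := by
  induction hh using Submonoid.closure_induction with
  | mem g hgmem =>
    obtain ⟨t, htN, rfl⟩ := hgmem
    intro rl1 rl2 h1 h2
    rw [AA_x, AA_x]
    exact ⟨insR_split h1 h2 htN, insR_ge h1 htN⟩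
  | one =>
    intro rl1 rl2 h1 h2
    rw [AA_one]
    exact ⟨rfl, h1⟩
  | mul g1 g2 hg1 hg2 ih1 ih2 =>
    intro rl1 rl2 h1 h2
    rw [AA_mul, Function.comp_apply, Function.comp_apply, (ih1 rl1 rl2 h1 h2).1]
    exact ih2 (AA g1 rl1) rl2 (ih1 rl1 rl2 h1 h2).2 h2

/-- Key commutation: a large generator moves past `g`, shifting by `mlen g`. -/
lemma xM_comm {B : ℕ} {g : ThompsonM}
    (hg : g ∈ Submonoid.closure {h : ThompsonM | ∃ t : ℕ, t ≤ B ∧ h = xM t}) :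
    ∀ k, B < k → xM k * g = g * xM (k + mlen g) := by
  induction hg using Submonoid.closure_induction with
  | mem g hgmem =>
    obtain ⟨t, htB, rfl⟩ := hgmem
    intro k hk
    rw [mlen_xM, xM, xM, xM, ← map_mul, ← map_mul]
    exact (Con.eq _).2 (ConGen.Rel.of _ _ ⟨t, k, by omega, rfl, rfl⟩)
  | one => intro k hk; rw [mlen_one, one_mul, mul_one, Nat.add_zero]
  | mul g1 g2 hg1 hg2 ih1 ih2 =>
    intro k hk
    rw [← mul_assoc, ih1 k hk, mul_assoc, ih2 (k + mlen g1) (by omega), mlen_mul, ← mul_assoc,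
      Nat.add_assoc]

lemma big_comm {B : ℕ} {h : ThompsonM}
    (hh : h ∈ Submonoid.closure {g : ThompsonM | ∃ t : ℕ, B < t ∧ g = xM t})
    {g : ThompsonM}
    (hg : g ∈ Submonoid.closure {h : ThompsonM | ∃ t : ℕ, t ≤ B ∧ h = xM t}) :
    h * g = g * (⇑shiftM)^[mlen g] h := by
  induction hh using Submonoid.closure_induction with
  | mem x hx =>
    obtain ⟨t, htB, rfl⟩ := hx
    rw [xM_comm hg t htB, shift_iter_x]
  | one => rw [one_mul, shift_iter_one, mul_one]
  | mul h1 h2 hh1 hh2 ih1 ih2 =>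
    rw [mul_assoc, ih2, ← mul_assoc, ih1, mul_assoc, shift_iter_mul]

lemma shift_iter_closure {i s k : ℕ} {g : ThompsonM}
    (hg : g ∈ Submonoid.closure {h : ThompsonM | ∃ t : ℕ, i ≤ t ∧ t ≤ i + s ∧ h = xM t}) :
    (⇑shiftM)^[k] g ∈
      Submonoid.closure {h : ThompsonM | ∃ t : ℕ, i + k ≤ t ∧ t ≤ i + s + k ∧ h = xM t} := by
  induction hg using Submonoid.closure_induction with
  | mem x hx =>
    obtain ⟨t, ht1, ht2, rfl⟩ := hx
    rw [shift_iter_x]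
    exact Submonoid.subset_closure ⟨t + k, by omega, by omega, rfl⟩
  | one => rw [shift_iter_one]; exact one_mem _
  | mul g1 g2 hg1 hg2 ih1 ih2 => rw [shift_iter_mul]; exact mul_mem ih1 ih2
lemma mapDomain_eq_sum {K : Type*} [Field K] (b : MonoidAlgebra K ThompsonM)
    (F : ThompsonM → ThompsonM) :
    MonoidAlgebra.mapDomain F b = ∑ g ∈ b.coeff.support, MonoidAlgebra.single (F g) (b.coeff g) := by
  apply MonoidAlgebra.coeff_injective
  rw [MonoidAlgebra.coeff_sum]
  rfl

lemma mapDomain_comp' {K : Type*} [Field K] (f g : ThompsonM → ThompsonM)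
    (b : MonoidAlgebra K ThompsonM) :
    MonoidAlgebra.mapDomain (f ∘ g) b = MonoidAlgebra.mapDomain f (MonoidAlgebra.mapDomain g b) := by
  simp only [MonoidAlgebra.mapDomain, Finsupp.mapDomain_comp, MonoidAlgebra.coeff_ofCoeff]

lemma self_eq_sum {K : Type*} [Field K] (b : MonoidAlgebra K ThompsonM) :
    b = ∑ g ∈ b.coeff.support, MonoidAlgebra.single g (b.coeff g) := (MonoidAlgebra.sum_coeff_single b).symm

lemma prod_comm_of_supp {K : Type*} [Field K] (b : MonoidAlgebra K ThompsonM)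
    (F1 F2 : ThompsonM → ThompsonM)
    (hcomm : ∀ g ∈ b.coeff.support, ∀ h ∈ b.coeff.support, F1 h * g = g * F2 h) :
    (∑ h ∈ b.coeff.support, MonoidAlgebra.single (F1 h) (b.coeff h)) * b =
      b * ∑ h ∈ b.coeff.support, MonoidAlgebra.single (F2 h) (b.coeff h) := by
  have hb : b = ∑ g ∈ b.coeff.support, MonoidAlgebra.single g (b.coeff g) := self_eq_sum b
  have main : (∑ h ∈ b.coeff.support, MonoidAlgebra.single (F1 h) (b.coeff h)) *
        (∑ g ∈ b.coeff.support, MonoidAlgebra.single g (b.coeff g)) =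
      (∑ g ∈ b.coeff.support, MonoidAlgebra.single g (b.coeff g)) *
        ∑ h ∈ b.coeff.support, MonoidAlgebra.single (F2 h) (b.coeff h) := by
    rw [Finset.sum_mul_sum, Finset.sum_mul_sum, Finset.sum_comm]
    refine Finset.sum_congr rfl fun g hg => Finset.sum_congr rfl fun h hh => ?_
    rw [MonoidAlgebra.single_mul_single, MonoidAlgebra.single_mul_single, hcomm g hg h hh,
      mul_comm (b.coeff h) (b.coeff g)]
  have h1 : (∑ h ∈ b.coeff.support, MonoidAlgebra.single (F1 h) (b.coeff h)) * b =
      (∑ h ∈ b.coeff.support, MonoidAlgebra.single (F1 h) (b.coeff h)) *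
        ∑ g ∈ b.coeff.support, MonoidAlgebra.single g (b.coeff g) := by rw [← hb]
  have h2 : b * (∑ h ∈ b.coeff.support, MonoidAlgebra.single (F2 h) (b.coeff h)) =
      (∑ g ∈ b.coeff.support, MonoidAlgebra.single g (b.coeff g)) *
        ∑ h ∈ b.coeff.support, MonoidAlgebra.single (F2 h) (b.coeff h) := by rw [← hb]
  rw [h1, h2, main]

lemma shiftA_iter {K : Type*} [Field K] (n : ℕ) (b : MonoidAlgebra K ThompsonM) :
    (⇑(shiftA K))^[n] b = MonoidAlgebra.mapDomain ((⇑shiftM)^[n]) b := by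
  induction n generalizing b with
  | zero => simp [MonoidAlgebra.mapDomain, Finsupp.mapDomain_id]
  | succ n ih =>
    rw [Function.iterate_succ_apply, ih,
      show (shiftA K) b = MonoidAlgebra.mapDomain (⇑shiftM) b from rfl, ← mapDomain_comp',
      ← Function.iterate_succ]

/-- Injectivity of the product decomposition. -/
lemma prod_inj {d i s m : ℕ} (hm : s < m) {g g' h h' : ThompsonM}
    (hg : g ∈ Submonoid.closure {x : ThompsonM | ∃ t : ℕ, i ≤ t ∧ t ≤ i + s ∧ x = xM t})
    (hg' : g' ∈ Submonoid.closure {x : ThompsonM | ∃ t : ℕ, i ≤ t ∧ t ≤ i + s ∧ x = xM t})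
    (hdg : mlen g = d) (hdg' : mlen g' = d)
    (hh : h ∈ Submonoid.closure {x : ThompsonM | ∃ t : ℕ, i + m + d ≤ t ∧ x = xM t})
    (hh' : h' ∈ Submonoid.closure {x : ThompsonM | ∃ t : ℕ, i + m + d ≤ t ∧ x = xM t})
    (hdh : mlen h = d) (hdh' : mlen h' = d)
    (heq : g * h = g' * h') : g = g' ∧ h = h' := by
  have key : ∀ (a c : ThompsonM),
      a ∈ Submonoid.closure {x : ThompsonM | ∃ t : ℕ, i ≤ t ∧ t ≤ i + s ∧ x = xM t} →
      mlen a = d →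
      c ∈ Submonoid.closure {x : ThompsonM | ∃ t : ℕ, i + m + d ≤ t ∧ x = xM t} →
      nfr (a * c) = nfr c ++ nfr a := by
    intro a c ha hda hc
    have ha' : a ∈ Submonoid.closure {x : ThompsonM | ∃ t : ℕ, t ≤ i + s ∧ x = xM t} :=
      Submonoid.closure_mono
        (fun x hx => by obtain ⟨t, _, ht2, hxx⟩ := hx; exact ⟨t, ht2, hxx⟩) ha
    have hbound : ∀ x ∈ nfr a, x < i + m + d := by
      intro x hx
      have := AA_upper ha' [] (i + s) le_rfl (by simp) x hx
      rw [hda] at this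
      omega
    have hsplit := AA_lower_split hc [] (nfr a) (by simp) hbound
    have : nfr (a * c) = AA c (nfr a) := by rw [nfr, AA_mul]; rfl
    rw [this, show nfr a = [] ++ nfr a from rfl, hsplit.1]
    rfl
  have e1 := key g h hg hdg hh
  have e2 := key g' h' hg' hdg' hh'
  rw [heq, e2] at e1
  have hlen : (nfr h').length = (nfr h).length := by
    rw [nfr_length, nfr_length, hdh, hdh']
  obtain ⟨eh, eg⟩ := List.append_inj e1 hlen
  exact ⟨nfr_injective eg.symm, nfr_injective eh.symm⟩

/-- for a homogeneous `b ∈ K[M]` of degree `d` in the variables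
`x_i, …, x_{i+s}` and any `m > s`, `φ^m(b)·b = b·φ^{m+d}(b)`; in particular, if
`b ≠ 0` the right ideals `bR` and `φ^m(b)R` intersect nontrivially. -/
theorem stmt7 (K : Type*) [Field K] (b : MonoidAlgebra K ThompsonM) (d i s m : ℕ)
    (hvars : ∀ g ∈ b.coeff.support,
      g ∈ Submonoid.closure {h : ThompsonM | ∃ t : ℕ, i ≤ t ∧ t ≤ i + s ∧ h = xM t})
    (hhom : ∀ g ∈ b.coeff.support, mlen g = d)
    (hm : s < m) :
    (⇑(shiftA K))^[m] b * b = b * (⇑(shiftA K))^[m + d] b ∧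
    (b ≠ 0 → ∃ r t : MonoidAlgebra K ThompsonM,
      b * r = (⇑(shiftA K))^[m] b * t ∧ b * r ≠ 0) := by
  classical
  have e1 : (⇑(shiftA K))^[m] b = MonoidAlgebra.mapDomain ((⇑shiftM)^[m]) b := shiftA_iter m b
  have e2 : (⇑(shiftA K))^[m + d] b = MonoidAlgebra.mapDomain ((⇑shiftM)^[m + d]) b :=
    shiftA_iter (m + d) b
  have hcomm : ∀ g ∈ b.coeff.support, ∀ h ∈ b.coeff.support,
      (⇑shiftM)^[m] h * g = g * (⇑shiftM)^[m + d] h := by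
    intro g hg h hh
    have hg1 : g ∈ Submonoid.closure {x : ThompsonM | ∃ t, t ≤ i + s ∧ x = xM t} :=
      Submonoid.closure_mono
        (fun x hx => by obtain ⟨t, _, ht2, hxx⟩ := hx; exact ⟨t, ht2, hxx⟩) (hvars g hg)
    have hh1 : (⇑shiftM)^[m] h ∈
        Submonoid.closure {x : ThompsonM | ∃ t, i + s < t ∧ x = xM t} :=
      Submonoid.closure_mono
        (fun x hx => by obtain ⟨t, ht1, _, hxx⟩ := hx; exact ⟨t, by omega, hxx⟩)
        (shift_iter_closure (hvars h hh))
    have hbc := big_comm hh1 hg1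
    rw [hhom g hg] at hbc
    rw [hbc, ← Function.iterate_add_apply, Nat.add_comm d m]
  have part1 : (⇑(shiftA K))^[m] b * b = b * (⇑(shiftA K))^[m + d] b := by
    rw [e1, e2, mapDomain_eq_sum, mapDomain_eq_sum]
    exact prod_comm_of_supp b _ _ hcomm
  refine ⟨part1, fun hb0 => ?_⟩
  obtain ⟨g0, hg0⟩ := Finsupp.support_nonempty_iff.2 (mt MonoidAlgebra.coeff_eq_zero.1 hb0)
  refine ⟨(⇑(shiftA K))^[m + d] b, b, part1.symm, ?_⟩
  have hclos : ∀ h ∈ b.coeff.support, (⇑shiftM)^[m + d] h ∈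
      Submonoid.closure {x : ThompsonM | ∃ t, i + m + d ≤ t ∧ x = xM t} := fun h hh =>
    Submonoid.closure_mono
      (fun x hx => by obtain ⟨t, ht1, _, hxx⟩ := hx; exact ⟨t, by omega, hxx⟩)
      (shift_iter_closure (hvars h hh))
  have hlen2 : ∀ h ∈ b.coeff.support, mlen ((⇑shiftM)^[m + d] h) = d := fun h hh => by
    rw [mlen_shift_iter, hhom h hh]
  have hcF2g0 : (MonoidAlgebra.mapDomain ((⇑shiftM)^[m + d]) b).coeff ((⇑shiftM)^[m + d] g0) = b.coeff g0 :=
    Finsupp.mapDomain_apply (shift_iter_injective (m + d)) b.coeff g0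
  have hsupp2 : (MonoidAlgebra.mapDomain ((⇑shiftM)^[m + d]) b).coeff.support ⊆
      b.coeff.support.image ((⇑shiftM)^[m + d]) := Finsupp.mapDomain_support
  have huniq : ∀ a1 ∈ b.coeff.support, ∀ a2 ∈ (MonoidAlgebra.mapDomain ((⇑shiftM)^[m + d]) b).coeff.support,
      a1 * a2 = g0 * (⇑shiftM)^[m + d] g0 → a1 = g0 ∧ a2 = (⇑shiftM)^[m + d] g0 := by
    intro a1 ha1 a2 ha2 hprod
    obtain ⟨h0, hh0, rfl⟩ := Finset.mem_image.1 (hsupp2 ha2)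
    exact prod_inj hm (hvars a1 ha1) (hvars g0 hg0) (hhom a1 ha1) (hhom g0 hg0)
      (hclos h0 hh0) (hclos g0 hg0) (hlen2 h0 hh0) (hlen2 g0 hg0) hprod
  have hco : (b * (⇑(shiftA K))^[m + d] b).coeff (g0 * (⇑shiftM)^[m + d] g0) = b.coeff g0 * b.coeff g0 := by
    rw [e2, MonoidAlgebra.coeff_mul]
    unfold Finsupp.sum
    have outer : ∀ a1 ∈ b.coeff.support, a1 ≠ g0 →
        (∑ a2 ∈ (MonoidAlgebra.mapDomain ((⇑shiftM)^[m + d]) b).coeff.support,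
          if a1 * a2 = g0 * (⇑shiftM)^[m + d] g0 then
            b.coeff a1 * (MonoidAlgebra.mapDomain ((⇑shiftM)^[m + d]) b).coeff a2 else 0) = 0 := by
      intro a1 ha1 hne
      refine Finset.sum_eq_zero fun a2 ha2 => ?_
      rw [if_neg]
      intro hp
      exact hne (huniq a1 ha1 a2 ha2 hp).1
    rw [Finset.sum_eq_single_of_mem g0 hg0 outer]
    have hmem : (⇑shiftM)^[m + d] g0 ∈ (MonoidAlgebra.mapDomain ((⇑shiftM)^[m + d]) b).coeff.support := by
      rw [Finsupp.mem_support_iff, hcF2g0]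
      exact Finsupp.mem_support_iff.1 hg0
    have inner : ∀ a2 ∈ (MonoidAlgebra.mapDomain ((⇑shiftM)^[m + d]) b).coeff.support,
        a2 ≠ (⇑shiftM)^[m + d] g0 →
        (if g0 * a2 = g0 * (⇑shiftM)^[m + d] g0 then
          b.coeff g0 * (MonoidAlgebra.mapDomain ((⇑shiftM)^[m + d]) b).coeff a2 else 0) = 0 := by
      intro a2 ha2 hne
      rw [if_neg]
      intro hp
      exact hne (huniq g0 hg0 a2 ha2 hp).2
    rw [Finset.sum_eq_single_of_mem _ hmem inner, if_pos rfl, hcF2g0]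
  intro hzero
  rw [hzero] at hco
  simp only [MonoidAlgebra.coeff_zero, Finsupp.coe_zero, Pi.zero_apply] at hco
  exact mul_ne_zero (Finsupp.mem_support_iff.1 hg0) (Finsupp.mem_support_iff.1 hg0) hco.symm
end
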